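/- Suppose every DtN operator T^(i) and outgoing data h^(i) at tree level ℓ+1 satisfy u_ext = T·g_ext + h for any solution u of the PDE on the corresponding node (where u_ext and g_ext are the normal derivative and trace of u on the node's boundary). Then the merged operators T^(j) = A − B D⁻¹ C and h^(j) = h_ext^(child) − B D⁻¹ h_int^(child) from the Schur-complement merge satisfy the same relation on the parent node j, provided the solution and its normal derivative are continuous across the merge interfaces. -/
import Mathlib


/-- Correctness of the Schur-complement merge: if the merge constraint system holds
(continuity of the solution and of its normal derivative across the interfaces),
then the merged DtN operator `T = A − B D⁻¹ C` and outgoing data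
`h = h_ext − B D⁻¹ h_int` satisfy `u_ext = T g_ext + h` on the parent node. -/
theorem hps_merge_correctness
    {n m : Type*} [Fintype n] [Fintype m] [DecidableEq m]
    (A : Matrix n n ℝ) (B : Matrix n m ℝ) (C : Matrix m n ℝ) (D : Matrix m m ℝ)
    (hD : IsUnit D.det)
    (g_ext u_ext h_ext : n → ℝ) (g_int h_int : m → ℝ)
    (hcont₁ : u_ext = A.mulVec g_ext + B.mulVec g_int + h_ext)
    (hcont₂ : C.mulVec g_ext + D.mulVec g_int + h_int = 0) :
    u_ext = (A - B * D⁻¹ * C).mulVec g_ext + (h_ext - (B * D⁻¹).mulVec h_int) := by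
  have hg : g_int = -(D⁻¹.mulVec (C.mulVec g_ext + h_int)) := by
    have h1 : D.mulVec g_int = -(C.mulVec g_ext + h_int) := by
      have h := hcont₂
      rw [show C.mulVec g_ext + D.mulVec g_int + h_int
          = D.mulVec g_int + (C.mulVec g_ext + h_int) by abel] at h
      exact eq_neg_of_add_eq_zero_left h
    have h2 := congrArg (D⁻¹.mulVec) h1
    rwa [Matrix.mulVec_mulVec, Matrix.nonsing_inv_mul D hD, Matrix.one_mulVec,
      Matrix.mulVec_neg] at h2
  subst hcont₁
  rw [hg]
  simp only [Matrix.sub_mulVec, Matrix.mulVec_neg, Matrix.mulVec_add,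
    Matrix.mulVec_mulVec, Matrix.mul_assoc, neg_add]
  abel
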